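/- For every integer k ≥ 1 and every real m with |m| ≥ 1, the Fourier-type series ∑_{j=1}^{∞} cos(2πj/m)/j^{2k} equals ∑_{j=0}^{k} ((-1)^{k-j}/(2k-2j)!)·(2π/m)^{2k-2j}·ζ(2j) + ((-1)^k·|m|/(4(2k-1)!))·(2π/m)^{2k}, where ζ(0) = -1/2. -/

import Mathlib

open Real Complex Finset

lemma bernoulli_poly_eval_split (k : ℕ) (hk : 1 ≤ k) (x : ℝ) :
    ((Polynomial.bernoulli (2*k)).map (algebraMap ℚ ℝ)).eval x
      = (∑ j ∈ range (k+1), (bernoulli (2*j) : ℝ) * ((2*k).choose (2*j)) * x^(2*k-2*j))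
        - k * x^(2*k-1) := by
  rw [Polynomial.bernoulli, Polynomial.map_sum, Polynomial.eval_finset_sum]
  simp only [Polynomial.map_monomial, Polynomial.eval_monomial, map_mul, map_natCast,
    eq_ratCast]
  rw [← Finset.sum_filter_add_sum_filter_not (range (2*k+1)) (fun i => Even i)]
  have himg : filter (fun i => Even i) (range (2*k+1)) = (range (k+1)).image (fun j => 2*j) := by
    ext i
    simp only [mem_filter, mem_range, mem_image]; simp only [Even]
    constructor
    · rintro ⟨h1, c, rfl⟩; exact ⟨c, by omega, by omega⟩
    · rintro ⟨c, hc, rfl⟩; exact ⟨by omega, c, by omega⟩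
  rw [himg, Finset.sum_image (by intro a _ b _ h; simp only at h; omega)]
  have hodd : ∑ i ∈ filter (fun i => ¬ Even i) (range (2*k+1)),
      ((bernoulli i : ℝ) * ((2*k).choose i) * x ^ (2*k - i)) = - (k : ℝ) * x^(2*k-1) := by
    rw [Finset.sum_eq_single_of_mem 1]
    · rw [bernoulli_one]
      have : (2*k).choose 1 = 2*k := Nat.choose_one_right _
      rw [this]
      push_cast
      ring
    · simp only [mem_filter, mem_range]
      exact ⟨by omega, by simp⟩
    · intro i hi hne
      simp only [mem_filter, mem_range] at hi
      have : bernoulli i = 0 := by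
        rw [bernoulli_eq_bernoulli'_of_ne_one hne]
        exact bernoulli'_eq_zero_of_odd (Nat.not_even_iff_odd.1 hi.2) (by
          rcases Nat.not_even_iff_odd.1 hi.2 with ⟨c, rfl⟩
          omega)
      simp [this]
  rw [hodd]
  ring

theorem cos_fourier_series_even (k : ℕ) (hk : 1 ≤ k) (m : ℝ) (hm : 1 ≤ |m|) :
    ((∑' j : ℕ, Real.cos (2 * π * (j + 1) / m) / ((j : ℝ) + 1) ^ (2 * k) : ℝ) : ℂ) =
      (∑ j ∈ Finset.range (k + 1),
        ((-1 : ℂ) ^ (k - j) / (Nat.factorial (2 * k - 2 * j) : ℂ))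
          * ((2 * π / m : ℝ) : ℂ) ^ (2 * k - 2 * j) * riemannZeta (2 * j))
      + ((-1 : ℂ) ^ k * (|m| : ℝ) / (4 * (Nat.factorial (2 * k - 1) : ℂ)))
          * ((2 * π / m : ℝ) : ℂ) ^ (2 * k) := by
  have hm0 : (0:ℝ) < |m| := lt_of_lt_of_le one_pos hm
  have hmne : m ≠ 0 := fun h => by simp [h] at hm0
  set x : ℝ := |m|⁻¹ with hxdef
  have hxne : x ≠ 0 := inv_ne_zero (ne_of_gt hm0)
  have hx : x ∈ Set.Icc (0:ℝ) 1 := ⟨inv_nonneg.2 (abs_nonneg m), inv_le_one_of_one_le₀ hm⟩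
  have hk0 : k ≠ 0 := by omega
  have h1 := hasSum_one_div_nat_pow_mul_cos hk0 hx
  set B : ℝ := (Polynomial.map (algebraMap ℚ ℝ) (Polynomial.bernoulli (2 * k))).eval x with hB
  set S : ℝ := (-1:ℝ) ^ (k + 1) * (2 * π) ^ (2 * k) / 2 / (2 * k).factorial * B with hS
  -- the cos argument identity
  have hcosarg : ∀ t : ℝ, Real.cos (2 * π * t / m) = Real.cos (2 * π * t * x) := by
    intro t
    rcases abs_cases m with ⟨h, _⟩ | ⟨h, _⟩
    · rw [hxdef, h, div_eq_mul_inv]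
    · rw [hxdef, h]
      rw [show 2 * π * t * (-m)⁻¹ = -(2 * π * t / m) by
        rw [← div_eq_mul_inv, div_neg]]
      rw [Real.cos_neg]
  have h2 : HasSum (fun j : ℕ => Real.cos (2 * π * (j + 1) / m) / ((j:ℝ)+1) ^ (2*k)) S := by
    have h3 := (hasSum_nat_add_iff' (f := fun n : ℕ => 1 / (n:ℝ)^(2*k) * Real.cos (2*π*n*x)) 1).mpr h1
    simp only [Finset.range_one, Finset.sum_singleton, Nat.cast_zero,
      zero_pow (by omega : 2*k ≠ 0), div_zero, zero_mul, mul_zero, sub_zero] at h3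
    convert h3 using 2 with j
    · rfl
    push_cast
    rw [hcosarg (j+1)]
    ring
  rw [h2.tsum_eq]
  -- now the algebraic identity
  have hsum : S = (∑ j ∈ range (k+1),
      (-1:ℝ)^(k+1) * (2*π)^(2*k)/2/(2*k).factorial *
        ((bernoulli (2*j) : ℝ) * ((2*k).choose (2*j)) * x^(2*k-2*j)))
      + (-1:ℝ)^(k+1) * (2*π)^(2*k)/2/(2*k).factorial * (-(k:ℝ) * x^(2*k-1)) := by
    rw [hS, hB, bernoulli_poly_eval_split k hk x, mul_sub, Finset.mul_sum]
    ring
  have hx2 : x^2 = (m^2)⁻¹ := by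
    rw [hxdef, inv_pow, _root_.sq_abs]
  have hpowmx : ∀ d : ℕ, ((2*π/m : ℝ) : ℂ)^(2*d) = (((2*π*x)^(2*d) : ℝ) : ℂ) := by
    intro d
    norm_cast
    rw [pow_mul, pow_mul]
    congr 1
    rw [div_pow, mul_pow (2*π) x, hx2, div_eq_mul_inv]
  have hterm : ∀ j ∈ range (k+1),
      ((-1 : ℂ) ^ (k - j) / (Nat.factorial (2 * k - 2 * j) : ℂ))
          * ((2 * π / m : ℝ) : ℂ) ^ (2 * k - 2 * j) * riemannZeta (2 * j)
      = (((-1:ℝ)^(k+1) * (2*π)^(2*k)/2/(2*k).factorial *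
        ((bernoulli (2*j) : ℝ) * ((2*k).choose (2*j)) * x^(2*k-2*j)) : ℝ) : ℂ) := by
    intro j hj
    rw [Finset.mem_range, Nat.lt_succ_iff] at hj
    obtain ⟨d, rfl⟩ : ∃ d, k = j + d := ⟨k - j, by omega⟩
    have h2d : 2*(j+d) - 2*j = 2*d := by omega
    have hd : (j+d) - j = d := by omega
    rw [h2d, hd, hpowmx d]
    have hfacn := Nat.choose_mul_factorial_mul_factorial (show 2*j ≤ 2*(j+d) by omega)
    rw [h2d] at hfacn
    have hfac : (((2*(j+d)).choose (2*j) : ℂ)) * ((2*j).factorial : ℂ) * ((2*d).factorial : ℂ)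
        = ((2*(j+d)).factorial : ℂ) := by exact_mod_cast congrArg (Nat.cast (R := ℂ)) hfacn
    have hf1 : ((2*j).factorial : ℂ) ≠ 0 := Nat.cast_ne_zero.2 (Nat.factorial_ne_zero _)
    have hf2 : ((2*d).factorial : ℂ) ≠ 0 := Nat.cast_ne_zero.2 (Nat.factorial_ne_zero _)
    have hf3 : (((2*(j+d)).factorial : ℂ)) ≠ 0 := Nat.cast_ne_zero.2 (Nat.factorial_ne_zero _)
    have hchoose : (((2*(j+d)).choose (2*j) : ℂ))
        = ((2*(j+d)).factorial : ℂ) / (((2*j).factorial : ℂ) * ((2*d).factorial : ℂ)) := by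
      rw [eq_div_iff (by exact mul_ne_zero hf1 hf2), ← mul_assoc, hfac]
    rcases Nat.eq_zero_or_pos j with rfl | hj1
    · rw [show riemannZeta (2 * ((0:ℕ):ℂ)) = -1/2 by norm_num [riemannZeta_zero]]
      push_cast [hchoose, bernoulli_zero]
      field_simp
      ring
    · rw [riemannZeta_two_mul_nat (by omega : j ≠ 0)]
      have h2j : (2:ℂ)^(2*j-1) = 2^(2*j)/2 := by
        rw [eq_div_iff (two_ne_zero), ← pow_succ]
        congr 1
        omega
      rw [h2j]
      push_cast [hchoose]
      field_simp
      ring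
  have hsecond :
      ((-1 : ℂ) ^ k * (|m| : ℝ) / (4 * (Nat.factorial (2 * k - 1) : ℂ)))
          * ((2 * π / m : ℝ) : ℂ) ^ (2 * k)
      = (((-1:ℝ)^(k+1) * (2*π)^(2*k)/2/(2*k).factorial * (-(k:ℝ) * x^(2*k-1)) : ℝ) : ℂ) := by
    rw [hpowmx k]
    have hfaceq : ((2*k).factorial : ℂ) = (2*k) * ((2*k-1).factorial : ℂ) := by
      exact_mod_cast congrArg (Nat.cast (R := ℂ)) (Nat.mul_factorial_pred (by omega)).symm
    have hxabs : (|m| : ℝ) * x^(2*k) = x^(2*k-1) := by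
      rw [show 2*k = (2*k-1) + 1 by omega, pow_succ, hxdef]
      field_simp
      rw [Nat.add_sub_cancel]
    have hf1 : ((2*k-1).factorial : ℂ) ≠ 0 := Nat.cast_ne_zero.2 (Nat.factorial_ne_zero _)
    rw [← hxabs]
    push_cast [hfaceq]
    have hk0' : ((k:ℂ)) ≠ 0 := Nat.cast_ne_zero.2 hk0
    field_simp
    ring
  rw [Finset.sum_congr rfl hterm, hsecond, hsum]
  push_cast
  ring
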